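/- Let C ⊆ ℝ^m be a convex cone, F : C → [0,∞) concave and positively homogeneous of degree one on C, and f : [0,∞) → ℝ convex, differentiable and nondecreasing. Let v, w ∈ C and suppose that the function u ↦ f(F(v + u·w)) (defined for u ≥ 0) has a right derivative d at u = 0, i.e. (f(F(v+u·w)) − f(F(v)))/u → d as u → 0⁺. Then d ≥ f'(F(v)) · F(w). -/

import Mathlib

/-- **Lower bound for the right derivative of `f ∘ F` along a cone direction.**
Let `C ⊆ ℝ^m` be a convex cone, `F : C → [0,∞)` concave and positively homogeneous of
degree one, and `f : [0,∞) → ℝ` convex, differentiable and nondecreasing. If the map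
`u ↦ f (F (v + u • w))` has right derivative `d` at `u = 0`, then `d ≥ f' (F v) * F w`. -/
theorem right_deriv_lower_bound
    {m : ℕ} (C : Set (EuclideanSpace ℝ (Fin m)))
    (hC_ne : C.Nonempty)
    (hC_add : ∀ v ∈ C, ∀ w ∈ C, v + w ∈ C)
    (hC_smul : ∀ c : ℝ, 0 < c → ∀ v ∈ C, c • v ∈ C)
    (F : EuclideanSpace ℝ (Fin m) → ℝ)
    (hF_nonneg : ∀ v ∈ C, 0 ≤ F v)
    (hF_hom : ∀ c : ℝ, 0 < c → ∀ v ∈ C, F (c • v) = c * F v)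
    (hF_conc : ∀ v ∈ C, ∀ w ∈ C, ∀ s : ℝ, 0 ≤ s → s ≤ 1 →
      s * F v + (1 - s) * F w ≤ F (s • v + (1 - s) • w))
    (f : ℝ → ℝ)
    (hf_conv : ConvexOn ℝ (Set.Ici 0) f)
    (hf_diff : ∀ t : ℝ, 0 ≤ t → DifferentiableWithinAt ℝ f (Set.Ici 0) t)
    (hf_mono : MonotoneOn f (Set.Ici 0))
    (v w : EuclideanSpace ℝ (Fin m)) (hv : v ∈ C) (hw : w ∈ C)
    (d : ℝ)
    (hd : Filter.Tendsto (fun u : ℝ => (f (F (v + u • w)) - f (F v)) / u)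
      (nhdsWithin 0 (Set.Ioi 0)) (nhds d)) :
    derivWithin f (Set.Ici 0) (F v) * F w ≤ d := by

  set L := derivWithin f (Set.Ici 0) (F v) with hL
  -- reverse triangle inequality
  have hrev : ∀ a ∈ C, ∀ b ∈ C, F a + F b ≤ F (a + b) := by
    intro a ha b hb
    have h := hF_conc a ha b hb (1/2) (by norm_num) (by norm_num)
    have hab : a + b ∈ C := hC_add a ha b hb
    have : (1/2 : ℝ) • a + (1 - 1/2 : ℝ) • b = (1/2 : ℝ) • (a + b) := by
      norm_num
    rw [this, hF_hom (1/2) (by norm_num) _ hab] at h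
    linarith
  have hFw := hF_nonneg w hw
  have hFv := hF_nonneg v hv
  -- g has right derivative L * F w at 0
  have hfd : HasDerivWithinAt f L (Set.Ici 0) (F v) :=
    (hf_diff (F v) hFv).hasDerivWithinAt
  have haff : HasDerivWithinAt (fun u : ℝ => F v + u * F w) (F w) (Set.Ici 0) 0 := by
    simpa using ((hasDerivWithinAt_id (0:ℝ) (Set.Ici 0)).mul_const (F w)).const_add (F v)
  have hmaps : Set.MapsTo (fun u : ℝ => F v + u * F w) (Set.Ici 0) (Set.Ici 0) := by
    intro u hu
    simp only [Set.mem_Ici] at *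
    positivity
  have hfd' : HasDerivWithinAt f L (Set.Ici 0) (F v + 0 * F w) := by simpa using hfd
  have hg : HasDerivWithinAt (fun u : ℝ => f (F v + u * F w)) (L * F w) (Set.Ici 0) 0 := by
    exact (hfd'.comp 0 haff hmaps)
  have htend : Filter.Tendsto (fun u : ℝ => (f (F v + u * F w) - f (F v + 0 * F w)) / u)
      (nhdsWithin 0 (Set.Ioi 0)) (nhds (L * F w)) := by
    have := (hasDerivWithinAt_iff_tendsto_slope.mp hg)
    have hset : Set.Ici (0:ℝ) \ {0} = Set.Ioi 0 := by
      ext x; simp [Set.mem_diff, lt_iff_le_and_ne, eq_comm]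
    rw [hset] at this
    refine this.congr (fun u => ?_)
    simp [slope_def_field, div_eq_inv_mul]
  refine le_of_tendsto_of_tendsto htend hd ?_
  filter_upwards [self_mem_nhdsWithin] with u hu
  have hu' : (0:ℝ) < u := hu
  have hvw : v + u • w ∈ C := hC_add v hv _ (hC_smul u hu' w hw)
  have h1 : F v + u * F w ≤ F (v + u • w) := by
    have := hrev v hv (u • w) (hC_smul u hu' w hw)
    rwa [hF_hom u hu' w hw] at this
  have h2 : f (F v + u * F w) ≤ f (F (v + u • w)) :=
    hf_mono (by simp [Set.mem_Ici]; positivity) (Set.mem_Ici.mpr (hF_nonneg _ hvw)) h1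
  have : f (F v + 0 * F w) = f (F v) := by norm_num
  rw [this]
  gcongr
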